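/- Let V be a real inner product space and let α₁, α₂, α₃, β₁, β₂, β̄₃ ∈ V satisfy: ⟪τ,τ⟫ = 2 for each of these vectors; ⟪α₁,β₁⟫ = −1, ⟪β₁,α₃⟫ = −1, ⟪α₃,β̄₃⟫ = −1, ⟪α₁,α₃⟫ = ⟪α₁,β̄₃⟫ = ⟪β₁,β̄₃⟫ = 0; ⟪α₂,β₁⟫ = −1, ⟪α₂,β̄₃⟫ = 1, ⟪α₂,α₁⟫ = ⟪α₂,α₃⟫ = 0; and β₂ is orthogonal to each of α₁, β₁, α₃, β̄₃ (the Gram relations of the Carter diagram E₆(a₁)). Set β₃ := −(α₁ + β₁ + α₃ + β̄₃). Then ⟪β₃,β₃⟫ = 2, ⟪β₃,α₁⟫ = −1, and β₃ is orthogonal to each of α₂, α₃, β₁, β₂ (the Gram relations of the Dynkin diagram E₆). -/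
import Mathlib


open scoped RealInnerProductSpace


theorem stmt2 {V : Type*} [NormedAddCommGroup V] [InnerProductSpace ℝ V]
    (α₁ α₂ α₃ β₁ β₂ βb₃ : V)
    (h0 : ⟪α₁, α₁⟫ = 2)
    (h1 : ⟪α₂, α₂⟫ = 2)
    (h2 : ⟪α₃, α₃⟫ = 2)
    (h3 : ⟪β₁, β₁⟫ = 2)
    (h4 : ⟪β₂, β₂⟫ = 2)
    (h5 : ⟪βb₃, βb₃⟫ = 2)
    (h6 : ⟪α₁, β₁⟫ = -1)
    (h7 : ⟪β₁, α₃⟫ = -1)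
    (h8 : ⟪α₃, βb₃⟫ = -1)
    (h9 : ⟪α₁, α₃⟫ = 0)
    (h10 : ⟪α₁, βb₃⟫ = 0)
    (h11 : ⟪β₁, βb₃⟫ = 0)
    (h12 : ⟪α₂, β₁⟫ = -1)
    (h13 : ⟪α₂, βb₃⟫ = 1)
    (h14 : ⟪α₂, α₁⟫ = 0)
    (h15 : ⟪α₂, α₃⟫ = 0)
    (h16 : ⟪β₂, α₁⟫ = 0)
    (h17 : ⟪β₂, β₁⟫ = 0)
    (h18 : ⟪β₂, α₃⟫ = 0)
    (h19 : ⟪β₂, βb₃⟫ = 0)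
    (β₃ : V) (hdef : β₃ = -(α₁ + β₁ + α₃ + βb₃)) :
    ⟪β₃, β₃⟫ = 2 ∧
    ⟪β₃, α₁⟫ = -1 ∧
    ⟪β₃, α₂⟫ = 0 ∧
    ⟪β₃, α₃⟫ = 0 ∧
    ⟪β₃, β₁⟫ = 0 ∧
    ⟪β₃, β₂⟫ = 0 := by
  subst hdef
  have c6 := real_inner_comm α₁ β₁
  have c7 := real_inner_comm β₁ α₃
  have c8 := real_inner_comm α₃ βb₃
  have c9 := real_inner_comm α₁ α₃
  have c10 := real_inner_comm α₁ βb₃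
  have c11 := real_inner_comm β₁ βb₃
  have c12 := real_inner_comm α₂ β₁
  have c13 := real_inner_comm α₂ βb₃
  have c14 := real_inner_comm α₂ α₁
  have c15 := real_inner_comm α₂ α₃
  have c16 := real_inner_comm β₂ α₁
  have c17 := real_inner_comm β₂ β₁
  have c18 := real_inner_comm β₂ α₃
  have c19 := real_inner_comm β₂ βb₃
  simp only [inner_neg_left, inner_neg_right, inner_add_left, inner_add_right]
  refine ⟨by linarith, by linarith, by linarith, by linarith, by linarith, by linarith⟩
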